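/- If a self-similar resistance form on a self-similar finitely ramified fractal F is regular (all energy renormalization factors ρ_i > 1), then the R-completion Ω of V_* equals F. -/

import Mathlib

/-- A resistance form `(𝓔, Dom 𝓔)` on a set `V` in the sense of Kigami:
(RF1) `dom` is a linear subspace of `ℓ(V)` containing constants, `Energy` is a nonnegative
symmetric quadratic form vanishing exactly on constants; (RF2) the quotient modulo constants
is a Hilbert space (completeness); (RF3) finite extension property; (RF4) the effective
resistance suprema are finite; (RF5) the Markov property. -/
structure ResistanceForm (V : Type) : Type where
  dom : Set (V → ℝ)
  Energy : (V → ℝ) → (V → ℝ) → ℝ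
  dom_add_smul : ∀ u ∈ dom, ∀ v ∈ dom, ∀ a b : ℝ, (a • u + b • v) ∈ dom
  const_mem : ∀ c : ℝ, (fun _ => c) ∈ dom
  symm : ∀ u v, Energy u v = Energy v u
  add_smul_left : ∀ u v w : V → ℝ, ∀ a b : ℝ,
    Energy (a • u + b • v) w = a * Energy u w + b * Energy v w
  nonneg : ∀ u ∈ dom, 0 ≤ Energy u u
  energy_zero_iff : ∀ u ∈ dom, (Energy u u = 0 ↔ ∃ c : ℝ, u = fun _ => c)
  complete : ∀ u : ℕ → (V → ℝ), (∀ n, u n ∈ dom) →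
    (∀ ε : ℝ, 0 < ε → ∃ N, ∀ m ≥ N, ∀ n ≥ N, Energy (u m - u n) (u m - u n) < ε) →
    ∃ v ∈ dom, Filter.Tendsto (fun n => Energy (u n - v) (u n - v)) Filter.atTop (nhds 0)
  exists_extension : ∀ (s : Finset V) (g : V → ℝ), ∃ u ∈ dom, ∀ p ∈ s, u p = g p
  bddAbove : ∀ p q : V,
    BddAbove {r : ℝ | ∃ u ∈ dom, 0 < Energy u u ∧ r = (u p - u q) ^ 2 / Energy u u}
  markov : ∀ u ∈ dom, (fun p => min 1 (max 0 (u p))) ∈ dom ∧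
    Energy (fun p => min 1 (max 0 (u p))) (fun p => min 1 (max 0 (u p))) ≤ Energy u u

namespace ResistanceForm

variable {V : Type}

/-- The effective resistance
`R(p,q) = sup { (u(p) - u(q))² / 𝓔(u,u) : u ∈ Dom 𝓔, 𝓔(u,u) > 0 }`. -/
noncomputable def R (rf : ResistanceForm V) (p q : V) : ℝ :=
  sSup {r : ℝ | ∃ u ∈ rf.dom, 0 < rf.Energy u u ∧ r = (u p - u q) ^ 2 / rf.Energy u u}

end ResistanceForm
open Filter Topology

/-- Iterated composition `ψ_w = ψ_{w_1} ∘ ... ∘ ψ_{w_n}` for a finite word `w`. -/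
def iterMaps {F : Type} {m : ℕ} (ψ : Fin m → F → F) : {n : ℕ} → (Fin n → Fin m) → F → F
  | 0, _, x => x
  | _ + 1, w, x => ψ (w 0) (iterMaps ψ (fun i => w i.succ) x)

/-- A finitely ramified self-similar set: a compact connected metric space `F` with
injective contractions `ψ_1, ..., ψ_m` such that `F = ⋃ ψ_i(F)`, a finite vertex boundary
`V₀` with at least two elements, and for any two distinct words `w, w'` of the same length,
`F_w ∩ F_{w'} = V_w ∩ V_{w'}` where `F_w = ψ_w(F)` and `V_w = ψ_w(V₀)`. -/
structure SSFR (F : Type) [MetricSpace F] [CompactSpace F] [ConnectedSpace F] : Type where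
  m : ℕ
  hm : 0 < m
  ψ : Fin m → F → F
  inj : ∀ i, Function.Injective (ψ i)
  contraction : ∀ i, ∃ r : NNReal, r < 1 ∧ LipschitzWith r (ψ i)
  V0 : Finset F
  two_le_card_V0 : 2 ≤ V0.card
  cover : (⋃ i, Set.range (ψ i)) = Set.univ
  sep : ∀ n : ℕ, ∀ w w' : Fin n → Fin m, w ≠ w' →
    Set.range (iterMaps ψ w) ∩ Set.range (iterMaps ψ w') =
      (iterMaps ψ w '' (V0 : Set F)) ∩ (iterMaps ψ w' '' (V0 : Set F))

namespace SSFR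

variable {F : Type} [MetricSpace F] [CompactSpace F] [ConnectedSpace F]

/-- The set `V_*` of all vertex points `V_w = ψ_w(V₀)`. -/
def Vstar (S : SSFR F) : Set F :=
  ⋃ n : ℕ, ⋃ w : Fin n → Fin S.m, iterMaps S.ψ w '' (S.V0 : Set F)

/-- The vertices of level `n`: `V_n = ⋃_{w ∈ W_n} ψ_w(V₀)`. -/
def Vlevel (S : SSFR F) (n : ℕ) : Set F :=
  ⋃ w : Fin n → Fin S.m, iterMaps S.ψ w '' (S.V0 : Set F)

/-- `f ∘ ψ_i` as a function on `V_*`. -/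
def compose (S : SSFR F) (hmap : ∀ i, Set.MapsTo (S.ψ i) S.Vstar S.Vstar)
    (i : Fin S.m) (f : ↥S.Vstar → ℝ) : ↥S.Vstar → ℝ :=
  fun v => f ⟨S.ψ i v, hmap i v.2⟩

/-- A resistance form on `V_*` is self-similar with energy renormalization factors `ρ` if
`𝓔(f,f) = Σ_i ρ_i 𝓔(f ∘ ψ_i, f ∘ ψ_i)`. -/
def IsSelfSimilarForm (S : SSFR F) (hmap : ∀ i, Set.MapsTo (S.ψ i) S.Vstar S.Vstar)
    (rf : ResistanceForm ↥S.Vstar) (ρ : Fin S.m → ℝ) : Prop :=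
  ∀ f ∈ rf.dom, (∀ i, S.compose hmap i f ∈ rf.dom) ∧
    rf.Energy f f = ∑ i, ρ i * rf.Energy (S.compose hmap i f) (S.compose hmap i f)

/-- An `n`-harmonic function: an energy minimizer for the given values on `V_n`
(for `n = 0`, a harmonic function). -/
def IsNHarm (S : SSFR F) (rf : ResistanceForm ↥S.Vstar) (n : ℕ)
    (f : ↥S.Vstar → ℝ) : Prop :=
  f ∈ rf.dom ∧ ∀ g ∈ rf.dom, (∀ v : ↥S.Vstar, (v : F) ∈ S.Vlevel n → g v = f v) →
    rf.Energy f f ≤ rf.Energy g g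

end SSFR
section Aux

variable {V : Type} (rf : ResistanceForm V)

lemma aux_R_nonneg (p q : V) : 0 ≤ rf.R p q := by
  apply Real.sSup_nonneg
  rintro x ⟨u, hu, hE, rfl⟩
  exact div_nonneg (sq_nonneg _) hE.le

lemma aux_R_symm (p q : V) : rf.R p q = rf.R q p := by
  unfold ResistanceForm.R
  congr 1
  ext r
  constructor <;> rintro ⟨u, hu, hE, rfl⟩ <;>
    exact ⟨u, hu, hE, by rw [← neg_sub (u _) (u _), neg_sq]⟩

lemma aux_sq_le (p q : V) (u : V → ℝ) (hu : u ∈ rf.dom) :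
    (u p - u q) ^ 2 ≤ rf.R p q * rf.Energy u u := by
  rcases lt_or_eq_of_le (rf.nonneg u hu) with hE | hE
  · have hmem : (u p - u q) ^ 2 / rf.Energy u u ∈
        {r : ℝ | ∃ u ∈ rf.dom, 0 < rf.Energy u u ∧ r = (u p - u q) ^ 2 / rf.Energy u u} :=
      ⟨u, hu, hE, rfl⟩
    have := le_csSup (rf.bddAbove p q) hmem
    rw [div_le_iff₀ hE] at this
    exact this
  · obtain ⟨c, rfl⟩ := (rf.energy_zero_iff u hu).1 hE.symm
    rw [← hE, mul_zero]
    simp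

lemma aux_R_self (p : V) : rf.R p p = 0 := by
  refine le_antisymm (Real.sSup_le ?_ le_rfl) (aux_R_nonneg rf p p)
  rintro x ⟨u, hu, hE, rfl⟩
  simp

lemma aux_sqrt_triangle (p r q : V) :
    Real.sqrt (rf.R p q) ≤ Real.sqrt (rf.R p r) + Real.sqrt (rf.R r q) := by
  have hb : 0 ≤ Real.sqrt (rf.R p r) + Real.sqrt (rf.R r q) :=
    add_nonneg (Real.sqrt_nonneg _) (Real.sqrt_nonneg _)
  have hR : rf.R p q ≤ (Real.sqrt (rf.R p r) + Real.sqrt (rf.R r q)) ^ 2 := by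
    apply Real.sSup_le _ (sq_nonneg _)
    rintro x ⟨u, hu, hE, rfl⟩
    rw [div_le_iff₀ hE]
    have h1 : |u p - u r| ≤ Real.sqrt (rf.R p r) * Real.sqrt (rf.Energy u u) := by
      rw [← Real.sqrt_sq_eq_abs, ← Real.sqrt_mul (aux_R_nonneg rf p r)]
      exact Real.sqrt_le_sqrt (aux_sq_le rf p r u hu)
    have h2 : |u r - u q| ≤ Real.sqrt (rf.R r q) * Real.sqrt (rf.Energy u u) := by
      rw [← Real.sqrt_sq_eq_abs, ← Real.sqrt_mul (aux_R_nonneg rf r q)]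
      exact Real.sqrt_le_sqrt (aux_sq_le rf r q u hu)
    have h3 : |u p - u q| ≤
        (Real.sqrt (rf.R p r) + Real.sqrt (rf.R r q)) * Real.sqrt (rf.Energy u u) := by
      calc |u p - u q| ≤ |u p - u r| + |u r - u q| := by
            have := abs_sub_le (u p) (u r) (u q); linarith [abs_sub_le (u p) (u r) (u q)]
        _ ≤ _ := by rw [add_mul]; exact add_le_add h1 h2
    have h4 : (u p - u q) ^ 2 ≤
        ((Real.sqrt (rf.R p r) + Real.sqrt (rf.R r q)) * Real.sqrt (rf.Energy u u)) ^ 2 := by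
      rw [← sq_abs]
      exact pow_le_pow_left₀ (abs_nonneg _) h3 2
    calc (u p - u q) ^ 2 ≤ _ := h4
      _ = (Real.sqrt (rf.R p r) + Real.sqrt (rf.R r q)) ^ 2 * rf.Energy u u := by
          rw [mul_pow, Real.sq_sqrt hE.le]
  calc Real.sqrt (rf.R p q) ≤
      Real.sqrt ((Real.sqrt (rf.R p r) + Real.sqrt (rf.R r q)) ^ 2) := Real.sqrt_le_sqrt hR
    _ = _ := by rw [Real.sqrt_sq hb]

end Aux

section AuxS

variable {F : Type} [MetricSpace F] [CompactSpace F] [ConnectedSpace F]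

lemma aux_mapsTo_iterMaps (S : SSFR F) (hmap : ∀ i, Set.MapsTo (S.ψ i) S.Vstar S.Vstar) :
    ∀ {n : ℕ} (w : Fin n → Fin S.m), Set.MapsTo (iterMaps S.ψ w) S.Vstar S.Vstar := by
  intro n
  induction n with
  | zero => intro w x hx; exact hx
  | succ n ih =>
    intro w x hx
    exact hmap (w 0) (ih (fun i => w i.succ) hx)

lemma aux_iterMaps_succ {F' : Type} {m : ℕ} (ψ : Fin m → F' → F') :
    ∀ {n : ℕ} (w : Fin (n + 1) → Fin m) (x : F'),
      iterMaps ψ w x = iterMaps ψ (fun i : Fin n => w i.castSucc) (ψ (w (Fin.last n)) x) := by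
  intro n
  induction n with
  | zero => intro w x; rfl
  | succ n ih =>
    intro w x
    show ψ (w 0) (iterMaps ψ (fun i => w i.succ) x) = _
    rw [ih (fun i => w i.succ) x]
    rfl

lemma aux_energy_contract (S : SSFR F) (hmap : ∀ i, Set.MapsTo (S.ψ i) S.Vstar S.Vstar)
    (rf : ResistanceForm ↥S.Vstar) (ρ : Fin S.m → ℝ)
    (hss : S.IsSelfSimilarForm hmap rf ρ) (hreg : ∀ i, 1 < ρ i)
    (f : ↥S.Vstar → ℝ) (hf : f ∈ rf.dom) (i : Fin S.m) :
    ρ i * rf.Energy (S.compose hmap i f) (S.compose hmap i f) ≤ rf.Energy f f := by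
  obtain ⟨hdom, heq⟩ := hss f hf
  rw [heq]
  apply Finset.single_le_sum (f := fun j => ρ j * rf.Energy (S.compose hmap j f)
    (S.compose hmap j f)) _ (Finset.mem_univ i)
  intro j _
  exact mul_nonneg (le_of_lt (lt_trans one_pos (hreg j))) (rf.nonneg _ (hdom j))

lemma aux_R_contract (S : SSFR F) (hmap : ∀ i, Set.MapsTo (S.ψ i) S.Vstar S.Vstar)
    (rf : ResistanceForm ↥S.Vstar) (ρ : Fin S.m → ℝ)
    (hss : S.IsSelfSimilarForm hmap rf ρ) (hreg : ∀ i, 1 < ρ i)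
    (i : Fin S.m) (p q : ↥S.Vstar) :
    rf.R ⟨S.ψ i p, hmap i p.2⟩ ⟨S.ψ i q, hmap i q.2⟩ ≤ (ρ i)⁻¹ * rf.R p q := by
  have hρ : 0 < ρ i := lt_trans one_pos (hreg i)
  apply Real.sSup_le _ (mul_nonneg (inv_nonneg.2 hρ.le) (aux_R_nonneg rf p q))
  rintro x ⟨u, hu, hE, rfl⟩
  rw [div_le_iff₀ hE]
  set g := S.compose hmap i u with hg
  have hgdom : g ∈ rf.dom := (hss u hu).1 i
  have h1 : (g p - g q) ^ 2 ≤ rf.R p q * rf.Energy g g := aux_sq_le rf p q g hgdom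
  have h2 : ρ i * rf.Energy g g ≤ rf.Energy u u :=
    aux_energy_contract S hmap rf ρ hss hreg u hu i
  have hgp : g p = u ⟨S.ψ i p, hmap i p.2⟩ := rfl
  have hgq : g q = u ⟨S.ψ i q, hmap i q.2⟩ := rfl
  have hRnn : 0 ≤ rf.R p q := aux_R_nonneg rf p q
  have h3 : rf.Energy g g ≤ (ρ i)⁻¹ * rf.Energy u u := by
    rw [← mul_le_mul_iff_right₀ hρ]
    calc ρ i * rf.Energy g g ≤ rf.Energy u u := h2
      _ = ρ i * ((ρ i)⁻¹ * rf.Energy u u) := by field_simp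
  calc (u ⟨S.ψ i p, hmap i p.2⟩ - u ⟨S.ψ i q, hmap i q.2⟩) ^ 2
      = (g p - g q) ^ 2 := by rw [hgp, hgq]
    _ ≤ rf.R p q * rf.Energy g g := h1
    _ ≤ rf.R p q * ((ρ i)⁻¹ * rf.Energy u u) := by
        exact mul_le_mul_of_nonneg_left h3 hRnn
    _ = (ρ i)⁻¹ * rf.R p q * rf.Energy u u := by ring

lemma aux_R_iter (S : SSFR F) (hmap : ∀ i, Set.MapsTo (S.ψ i) S.Vstar S.Vstar)
    (rf : ResistanceForm ↥S.Vstar) (ρ : Fin S.m → ℝ)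
    (hss : S.IsSelfSimilarForm hmap rf ρ) (hreg : ∀ i, 1 < ρ i)
    (c : ℝ) (hc0 : 0 ≤ c) (hc : ∀ i, (ρ i)⁻¹ ≤ c) :
    ∀ {n : ℕ} (w : Fin n → Fin S.m) (p q : ↥S.Vstar),
      rf.R ⟨iterMaps S.ψ w p, aux_mapsTo_iterMaps S hmap w p.2⟩
           ⟨iterMaps S.ψ w q, aux_mapsTo_iterMaps S hmap w q.2⟩ ≤ c ^ n * rf.R p q := by
  intro n
  induction n with
  | zero =>
    intro w p q
    have hp : (⟨iterMaps S.ψ w p, aux_mapsTo_iterMaps S hmap w p.2⟩ : ↥S.Vstar) = p :=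
      Subtype.ext rfl
    have hq : (⟨iterMaps S.ψ w q, aux_mapsTo_iterMaps S hmap w q.2⟩ : ↥S.Vstar) = q :=
      Subtype.ext rfl
    rw [hp, hq, pow_zero, one_mul]
  | succ n ih =>
    intro w p q
    set p' : ↥S.Vstar := ⟨iterMaps S.ψ (fun i => w i.succ) p,
      aux_mapsTo_iterMaps S hmap _ p.2⟩ with hp'
    set q' : ↥S.Vstar := ⟨iterMaps S.ψ (fun i => w i.succ) q,
      aux_mapsTo_iterMaps S hmap _ q.2⟩ with hq'
    have hp : (⟨iterMaps S.ψ w p, aux_mapsTo_iterMaps S hmap w p.2⟩ : ↥S.Vstar) =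
        ⟨S.ψ (w 0) p', hmap (w 0) p'.2⟩ := Subtype.ext rfl
    have hq : (⟨iterMaps S.ψ w q, aux_mapsTo_iterMaps S hmap w q.2⟩ : ↥S.Vstar) =
        ⟨S.ψ (w 0) q', hmap (w 0) q'.2⟩ := Subtype.ext rfl
    rw [hp, hq]
    calc rf.R ⟨S.ψ (w 0) p', hmap (w 0) p'.2⟩ ⟨S.ψ (w 0) q', hmap (w 0) q'.2⟩
        ≤ (ρ (w 0))⁻¹ * rf.R p' q' := aux_R_contract S hmap rf ρ hss hreg (w 0) p' q'
      _ ≤ c * (c ^ n * rf.R p q) := by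
          apply mul_le_mul (hc (w 0)) (ih (fun i => w i.succ) p q) (aux_R_nonneg rf p' q') hc0
      _ = c ^ (n + 1) * rf.R p q := by ring

end AuxS

/-- If a self-similar resistance form on a self-similar finitely ramified fractal `F` is
regular (all energy renormalization factors `ρ_i > 1`), then `Ω = F`: every point of `F` is
the limit of an `R`-Cauchy sequence from `V_*`, i.e. the `R`-completion of `V_*` fills all
of `F`. -/
theorem stmt19 {F : Type} [MetricSpace F] [CompactSpace F] [ConnectedSpace F]
    (S : SSFR F) (hmap : ∀ i, Set.MapsTo (S.ψ i) S.Vstar S.Vstar)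
    (rf : ResistanceForm ↥S.Vstar) (ρ : Fin S.m → ℝ)
    (hss : S.IsSelfSimilarForm hmap rf ρ)
    (hreg : ∀ i, 1 < ρ i) :
    ∀ x : F, ∃ v : ℕ → ↥S.Vstar,
      (∀ ε : ℝ, 0 < ε → ∃ N, ∀ j ≥ N, ∀ l ≥ N, rf.R (v j) (v l) < ε) ∧
      Filter.Tendsto (fun j => (v j : F)) Filter.atTop (nhds x) := by
  intro x
  classical
  -- choice of address
  have hcov : ∀ y : F, ∃ i z, S.ψ i z = y := by
    intro y
    have : y ∈ ⋃ i, Set.range (S.ψ i) := S.cover ▸ Set.mem_univ y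
    obtain ⟨i, z, hz⟩ := Set.mem_iUnion.1 this
    exact ⟨i, z, hz⟩
  let nxt : F → F := fun y => (hcov y).choose_spec.choose
  let idx : F → Fin S.m := fun y => (hcov y).choose
  have hstep : ∀ y, S.ψ (idx y) (nxt y) = y := fun y => (hcov y).choose_spec.choose_spec
  let pts : ℕ → F := fun n => nxt^[n] x
  let w : ℕ → Fin S.m := fun n => idx (pts n)
  have hpts : ∀ n, S.ψ (w n) (pts (n + 1)) = pts n := by
    intro n
    have : pts (n + 1) = nxt (pts n) := Function.iterate_succ_apply' nxt n x
    rw [this]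
    exact hstep (pts n)
  let W : (n : ℕ) → Fin n → Fin S.m := fun n k => w k
  have hWcast : ∀ n, (fun i : Fin n => W (n + 1) i.castSucc) = W n := by
    intro n; funext i; rfl
  have hG : ∀ n, iterMaps S.ψ (W n) (pts n) = x := by
    intro n
    induction n with
    | zero => rfl
    | succ n ih =>
      rw [aux_iterMaps_succ, hWcast n]
      have hlast : W (n + 1) (Fin.last n) = w n := rfl
      rw [hlast, hpts n, ih]
  -- base point
  have hV0ne : S.V0.Nonempty := Finset.card_pos.1 (lt_of_lt_of_le two_pos S.two_le_card_V0)
  obtain ⟨p₀, hp₀⟩ := hV0ne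
  have hp₀star : p₀ ∈ S.Vstar := by
    refine Set.mem_iUnion.2 ⟨0, Set.mem_iUnion.2 ⟨Fin.elim0, ⟨p₀, hp₀, rfl⟩⟩⟩
  set p₀s : ↥S.Vstar := ⟨p₀, hp₀star⟩ with hp₀s
  -- sequence
  let v : ℕ → ↥S.Vstar := fun n =>
    ⟨iterMaps S.ψ (W n) p₀, aux_mapsTo_iterMaps S hmap (W n) hp₀star⟩
  refine ⟨v, ?_, ?_⟩
  · -- R-Cauchy
    have hFinNe : Nonempty (Fin S.m) := ⟨⟨0, S.hm⟩⟩
    have hUne : (Finset.univ : Finset (Fin S.m)).Nonempty := Finset.univ_nonempty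
    set ρmin : ℝ := Finset.univ.inf' hUne ρ with hρmin_def
    have hρmin : 1 < ρmin := by
      rw [hρmin_def, Finset.lt_inf'_iff]
      intro i _; exact hreg i
    have hρpos : 0 < ρmin := lt_trans one_pos hρmin
    set c : ℝ := ρmin⁻¹ with hc_def
    have hc0 : 0 ≤ c := inv_nonneg.2 hρpos.le
    have hcl : c < 1 := inv_lt_one_of_one_lt₀ hρmin
    have hc : ∀ i, (ρ i)⁻¹ ≤ c := by
      intro i
      exact inv_anti₀ hρpos (Finset.inf'_le ρ (Finset.mem_univ i))
    set M : ℝ := Finset.univ.sup' hUne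
      (fun i => rf.R p₀s ⟨S.ψ i p₀s, hmap i p₀s.2⟩) with hM_def
    have hM0 : 0 ≤ M := by
      obtain ⟨i⟩ := hFinNe
      exact le_trans (aux_R_nonneg rf p₀s ⟨S.ψ i p₀s, hmap i p₀s.2⟩)
        (Finset.le_sup' (fun i => rf.R p₀s ⟨S.ψ i p₀s, hmap i p₀s.2⟩) (Finset.mem_univ i))
    -- one-step bound
    have honestep : ∀ n, rf.R (v n) (v (n + 1)) ≤ c ^ n * M := by
      intro n
      set q : ↥S.Vstar := ⟨S.ψ (w n) p₀s, hmap (w n) p₀s.2⟩ with hq_def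
      have hval : iterMaps S.ψ (W (n + 1)) p₀ = iterMaps S.ψ (W n) (q : F) := by
        rw [aux_iterMaps_succ, hWcast n]
      have hv1 : v (n + 1) = ⟨iterMaps S.ψ (W n) (q : F),
          aux_mapsTo_iterMaps S hmap (W n) q.2⟩ := Subtype.ext hval
      have hv0 : v n = ⟨iterMaps S.ψ (W n) (p₀s : F),
          aux_mapsTo_iterMaps S hmap (W n) p₀s.2⟩ := Subtype.ext rfl
      rw [hv0, hv1]
      calc rf.R ⟨iterMaps S.ψ (W n) (p₀s : F), aux_mapsTo_iterMaps S hmap (W n) p₀s.2⟩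
            ⟨iterMaps S.ψ (W n) (q : F), aux_mapsTo_iterMaps S hmap (W n) q.2⟩
          ≤ c ^ n * rf.R p₀s q := aux_R_iter S hmap rf ρ hss hreg c hc0 hc (W n) p₀s q
        _ ≤ c ^ n * M := by
            apply mul_le_mul_of_nonneg_left _ (pow_nonneg hc0 n)
            exact Finset.le_sup' (fun i => rf.R p₀s ⟨S.ψ i p₀s, hmap i p₀s.2⟩) (Finset.mem_univ (w n))
    set s : ℝ := Real.sqrt c with hs_def
    have hs : 0 ≤ s := Real.sqrt_nonneg c
    have hs1 : s < 1 := by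
      rw [hs_def]
      calc Real.sqrt c < Real.sqrt 1 := Real.sqrt_lt_sqrt hc0 hcl
        _ = 1 := Real.sqrt_one
    have hs2 : s ^ 2 = c := Real.sq_sqrt hc0
    -- chain bound
    have hchain : ∀ j l, j ≤ l →
        Real.sqrt (rf.R (v j) (v l)) ≤ Real.sqrt M * ∑ k ∈ Finset.Ico j l, s ^ k := by
      intro j l hjl
      induction l, hjl using Nat.le_induction with
      | base =>
        rw [aux_R_self, Real.sqrt_zero, Finset.Ico_self, Finset.sum_empty, mul_zero]
      | succ l hjl ih =>
        have htri := aux_sqrt_triangle rf (v j) (v l) (v (l + 1))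
        have h1 : Real.sqrt (rf.R (v l) (v (l + 1))) ≤ Real.sqrt M * s ^ l := by
          calc Real.sqrt (rf.R (v l) (v (l + 1))) ≤ Real.sqrt (c ^ l * M) :=
              Real.sqrt_le_sqrt (honestep l)
            _ = Real.sqrt (c ^ l) * Real.sqrt M := Real.sqrt_mul (pow_nonneg hc0 l) M
            _ = Real.sqrt M * s ^ l := by
                rw [show c ^ l = (s ^ l) ^ 2 by rw [← pow_mul, mul_comm, pow_mul, hs2],
                  Real.sqrt_sq (pow_nonneg hs l), mul_comm]
        rw [Finset.sum_Ico_succ_top hjl, mul_add]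
        linarith
    -- geometric tail
    have hsum : ∀ j l : ℕ, ∑ k ∈ Finset.Ico j l, s ^ k ≤ s ^ j * (1 - s)⁻¹ := by
      intro j l
      rw [Finset.sum_Ico_eq_sum_range]
      have : ∀ k, s ^ (j + k) = s ^ j * s ^ k := fun k => pow_add s j k
      simp_rw [this, ← Finset.mul_sum]
      apply mul_le_mul_of_nonneg_left _ (pow_nonneg hs j)
      rw [geom_sum_eq (ne_of_lt hs1)]
      have h2 : (0:ℝ) < 1 - s := by linarith
      have h3 : (0:ℝ) ≤ s ^ (l - j) := pow_nonneg hs _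
      rw [div_le_iff_of_neg (by linarith : s - 1 < 0)]
      have h4 : (s - 1) / (1 - s) = -1 := by field_simp; ring
      rw [inv_mul_eq_div, h4]; linarith
    set K : ℝ := Real.sqrt M * (1 - s)⁻¹ with hK_def
    have hK0 : 0 ≤ K := mul_nonneg (Real.sqrt_nonneg M) (inv_nonneg.2 (by linarith))
    intro ε hε
    have htend : Filter.Tendsto (fun N : ℕ => K ^ 2 * c ^ N) Filter.atTop (nhds 0) := by
      have := (tendsto_pow_atTop_nhds_zero_of_lt_one hc0 hcl).const_mul (K ^ 2)
      simpa using this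
    have hev : ∀ᶠ N : ℕ in Filter.atTop, K ^ 2 * c ^ N < ε :=
      htend.eventually_lt_const hε
    obtain ⟨N, hN⟩ := hev.exists
    refine ⟨N, ?_⟩
    have key : ∀ j l, N ≤ j → j ≤ l → rf.R (v j) (v l) < ε := by
      intro j l hNj hjl
      have h1 : Real.sqrt (rf.R (v j) (v l)) ≤ K * s ^ N := by
        calc Real.sqrt (rf.R (v j) (v l)) ≤ Real.sqrt M * ∑ k ∈ Finset.Ico j l, s ^ k :=
            hchain j l hjl
          _ ≤ Real.sqrt M * (s ^ j * (1 - s)⁻¹) :=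
            mul_le_mul_of_nonneg_left (hsum j l) (Real.sqrt_nonneg M)
          _ = K * s ^ j := by rw [hK_def]; ring
          _ ≤ K * s ^ N := mul_le_mul_of_nonneg_left
            (pow_le_pow_of_le_one hs hs1.le hNj) hK0
      have h2 : rf.R (v j) (v l) ≤ (K * s ^ N) ^ 2 := by
        have := pow_le_pow_left₀ (Real.sqrt_nonneg _) h1 2
        rwa [Real.sq_sqrt (aux_R_nonneg rf (v j) (v l))] at this
      calc rf.R (v j) (v l) ≤ (K * s ^ N) ^ 2 := h2
        _ = K ^ 2 * c ^ N := by rw [mul_pow, ← pow_mul, mul_comm N 2, pow_mul, hs2]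
        _ < ε := hN
    intro j hj l hl
    rcases le_total j l with h | h
    · exact key j l hj h
    · rw [aux_R_symm]; exact key l j hl h
  · -- convergence in F
    have hlip : ∀ i, ∃ r : NNReal, r < 1 ∧ LipschitzWith r (S.ψ i) := S.contraction
    let ri : Fin S.m → NNReal := fun i => (hlip i).choose
    have hri1 : ∀ i, ri i < 1 := fun i => (hlip i).choose_spec.1
    have hriL : ∀ i, LipschitzWith (ri i) (S.ψ i) := fun i => (hlip i).choose_spec.2
    set r : NNReal := Finset.univ.sup ri with hr_def
    have hr1 : r < 1 := by
      rw [hr_def, Finset.sup_lt_iff (by norm_num : (⊥ : NNReal) < 1)]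
      intro i _; exact hri1 i
    have hrL : ∀ i, LipschitzWith r (S.ψ i) :=
      fun i => (hriL i).weaken (Finset.le_sup (Finset.mem_univ i))
    have hiterL : ∀ (n : ℕ) (w' : Fin n → Fin S.m),
        LipschitzWith (r ^ n) (iterMaps S.ψ w') := by
      intro n
      induction n with
      | zero =>
        intro w'
        rw [pow_zero]
        exact fun a b => by simp [iterMaps, edist_dist]
      | succ n ih =>
        intro w'
        have : iterMaps S.ψ w' = (S.ψ (w' 0)) ∘ (iterMaps S.ψ (fun i => w' i.succ)) := rfl
        rw [this, pow_succ, mul_comm]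
        exact (hrL (w' 0)).comp (ih (fun i => w' i.succ))
    have hbd : Bornology.IsBounded (Set.univ : Set F) := isCompact_univ.isBounded
    set D : ℝ := Metric.diam (Set.univ : Set F) with hD_def
    have hdist : ∀ n, dist ((v n : F)) x ≤ (r : ℝ) ^ n * D := by
      intro n
      have h1 : dist ((v n : F)) x =
          dist (iterMaps S.ψ (W n) p₀) (iterMaps S.ψ (W n) (pts n)) := by
        rw [show x = iterMaps S.ψ (W n) (pts n) from (hG n).symm]
      rw [h1]
      calc dist (iterMaps S.ψ (W n) p₀) (iterMaps S.ψ (W n) (pts n))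
          ≤ (r ^ n : NNReal) * dist p₀ (pts n) := (hiterL n (W n)).dist_le_mul _ _
        _ ≤ (r : ℝ) ^ n * D := by
            push_cast
            apply mul_le_mul_of_nonneg_left _ (pow_nonneg r.coe_nonneg n)
            exact Metric.dist_le_diam_of_mem hbd (Set.mem_univ _) (Set.mem_univ _)
    rw [tendsto_iff_dist_tendsto_zero]
    apply squeeze_zero (fun n => dist_nonneg) hdist
    have hr1' : (r : ℝ) < 1 := by exact_mod_cast hr1
    have := (tendsto_pow_atTop_nhds_zero_of_lt_one r.coe_nonneg hr1').mul_const D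
    simpa using this
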